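/- For any permutation π ∈ S_n and any i with 0 ≤ i ≤ n-1, the permutations π∘ω^i and ω^i∘π have the same cyclic descent number as π, where ω is the n-cycle (1 2 ⋯ n). -/

import Mathlib

open Finset
open scoped Classical

/-- The value `π(s)` (0-indexed) of a permutation of `Fin n`, as a natural number. -/
def aval (n : ℕ) (π : Equiv.Perm (Fin n)) (s : ℕ) : ℕ :=
  if h : s < n then (π ⟨s, h⟩ : ℕ) else s

/-- The descent set of `π ∈ S_n` (0-indexed positions `s` with `π(s) > π(s+1)`). -/
def desSetA (n : ℕ) (π : Equiv.Perm (Fin n)) : Finset ℕ :=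
  (Finset.range (n - 1)).filter (fun s => aval n π (s + 1) < aval n π s)

/-- The descent number of `π ∈ S_n`. -/
def desA (n : ℕ) (π : Equiv.Perm (Fin n)) : ℕ := (desSetA n π).card

/-- The cyclic descent number of `π ∈ S_n`: ordinary descents together with a
descent in the last position when `π(n) > π(1)` (0-indexed: `π(n-1) > π(0)`). -/
def cdesA (n : ℕ) (π : Equiv.Perm (Fin n)) : ℕ :=
  desA n π + (if aval n π 0 < aval n π (n - 1) then 1 else 0)

def cdesC (n : ℕ) (π : Equiv.Perm (Fin (n+1))) : ℕ :=
  ((univ : Finset (Fin (n+1))).filter (fun s => (π (s+1) : ℕ) < (π s : ℕ))).card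

lemma aval_fin (n : ℕ) (π : Equiv.Perm (Fin (n+1))) (s : Fin (n+1)) :
    aval (n+1) π (s : ℕ) = (π s : ℕ) := by
  simp [aval, s.isLt, Fin.eta]

lemma aval_fin' (n : ℕ) (π : Equiv.Perm (Fin (n+1))) (a : ℕ) (h : a < n + 1) :
    aval (n+1) π a = (π ⟨a, h⟩ : ℕ) := aval_fin n π ⟨a, h⟩

theorem cdesA_eq_cdesC (n : ℕ) (π : Equiv.Perm (Fin (n+1))) :
    cdesA (n+1) π = cdesC n π := by
  classical
  have hsplit := Finset.card_filter_add_card_filter_not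
    (s := (univ : Finset (Fin (n+1))).filter (fun s => (π (s+1) : ℕ) < (π s : ℕ)))
    (p := fun s => s = Fin.last n)
  have hL : (Fin.last n + 1 : Fin (n+1)) = 0 := by simp
  have e0 : aval (n+1) π 0 = (π 0 : ℕ) := by
    rw [aval_fin' n π 0 (Nat.succ_pos n)]; congr 2
  have en : aval (n+1) π n = (π (Fin.last n) : ℕ) := by
    rw [aval_fin' n π n (Nat.lt_succ_self n)]; rfl
  have h1 : (((univ : Finset (Fin (n+1))).filter (fun s => (π (s+1) : ℕ) < (π s : ℕ))).filter
      (fun s => s = Fin.last n)).card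
      = (if aval (n+1) π 0 < aval (n+1) π n then 1 else 0) := by
    have hPiff : ((π (Fin.last n + 1) : ℕ) < (π (Fin.last n) : ℕ)) ↔
        aval (n+1) π 0 < aval (n+1) π n := by rw [hL, e0, en]
    by_cases hP : (π (Fin.last n + 1) : ℕ) < (π (Fin.last n) : ℕ)
    · rw [if_pos (hPiff.mp hP)]
      have : (((univ : Finset (Fin (n+1))).filter (fun s => (π (s+1) : ℕ) < (π s : ℕ))).filter
          (fun s => s = Fin.last n)) = {Fin.last n} := by
        ext s
        simp only [Finset.mem_filter, Finset.mem_univ, true_and, Finset.mem_singleton]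
        constructor
        · rintro ⟨_, h⟩; exact h
        · rintro rfl; exact ⟨hP, rfl⟩
      rw [this, Finset.card_singleton]
    · rw [if_neg (fun h => hP (hPiff.mpr h))]
      rw [Finset.card_eq_zero.mpr]
      rw [Finset.eq_empty_iff_forall_notMem]
      intro s hs
      simp only [Finset.mem_filter, Finset.mem_univ, true_and] at hs
      obtain ⟨h, rfl⟩ := hs
      exact hP h
  have h2 : (((univ : Finset (Fin (n+1))).filter (fun s => (π (s+1) : ℕ) < (π s : ℕ))).filter
      (fun s => ¬ s = Fin.last n)).card = desA (n+1) π := by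
    unfold desA desSetA
    apply Finset.card_bij (fun (s : Fin (n+1)) _ => (s : ℕ))
    · intro s hs
      simp only [Finset.mem_filter, Finset.mem_univ, true_and] at hs
      obtain ⟨hP, hlast⟩ := hs
      have hlt : (s : ℕ) < n := by
        have h1 := s.isLt
        rcases Nat.lt_or_ge (s : ℕ) n with h | h
        · exact h
        · exact absurd (Fin.ext (by simp [Fin.last]; omega)) hlast
      have hslt : s < Fin.last n := by
        rw [Fin.lt_iff_val_lt_val]; simpa [Fin.last] using hlt
      have hadd : ((s + 1 : Fin (n+1)) : ℕ) = (s : ℕ) + 1 := Fin.val_add_one_of_lt hslt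
      simp only [Finset.mem_filter, Finset.mem_range]
      refine ⟨by omega, ?_⟩
      rw [aval_fin' n π ((s:ℕ)+1) (by omega), aval_fin' n π (s:ℕ) s.isLt]
      have : (⟨(s:ℕ)+1, by omega⟩ : Fin (n+1)) = s + 1 := Fin.ext (by simp [hadd])
      rw [this]
      simpa [Fin.eta] using hP
    · intro a _ b _ h
      exact Fin.ext h
    · intro a ha
      simp only [Finset.mem_filter, Finset.mem_range] at ha
      obtain ⟨hlt, hcond⟩ := ha
      have hlt' : a < n := by omega
      have ha1 : a < n + 1 := by omega
      refine ⟨⟨a, ha1⟩, ?_, rfl⟩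
      simp only [Finset.mem_filter, Finset.mem_univ, true_and]
      have hslt : (⟨a, ha1⟩ : Fin (n+1)) < Fin.last n := by
        rw [Fin.lt_iff_val_lt_val]; simpa [Fin.last] using hlt'
      have hlast : (⟨a, ha1⟩ : Fin (n+1)) ≠ Fin.last n := Fin.ne_of_lt hslt
      have hadd : ((⟨a, ha1⟩ + 1 : Fin (n+1)) : ℕ) = a + 1 := Fin.val_add_one_of_lt hslt
      refine ⟨?_, hlast⟩
      rw [aval_fin' n π (a+1) (by omega), aval_fin' n π a ha1] at hcond
      have : (⟨a+1, by omega⟩ : Fin (n+1)) = ⟨a, ha1⟩ + 1 := Fin.ext (by simp [hadd])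
      rwa [this] at hcond
  unfold cdesA cdesC
  have hn : (n + 1) - 1 = n := rfl
  rw [hn]
  omega

theorem cdesC_right (n : ℕ) (π : Equiv.Perm (Fin (n+1))) :
    cdesC n (π * finRotate (n+1)) = cdesC n π := by
  unfold cdesC
  apply Finset.card_bij' (fun (s : Fin (n+1)) _ => s + 1) (fun (s : Fin (n+1)) _ => s - 1)
  · intro s hs
    simp only [Finset.mem_filter, Finset.mem_univ, true_and,
      Equiv.Perm.mul_apply, finRotate_succ_apply] at hs ⊢
    exact hs
  · intro s hs
    simp only [Finset.mem_filter, Finset.mem_univ, true_and,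
      Equiv.Perm.mul_apply, finRotate_succ_apply] at hs ⊢
    simpa [sub_add_cancel] using hs
  · intro s _; simp
  · intro s _; simp


theorem cdesC_left_aux (N : ℕ) (hN : N ≠ 0) (π : Equiv.Perm (Fin (N+1))) :
    cdesC N (finRotate (N+1) * π) = cdesC N π := by
    have hone : (1 : Fin (N+1)) ≠ 0 := by
      intro h
      have h2 := congrArg Fin.val h
      rw [Fin.val_one', Fin.val_zero] at h2
      rw [Nat.mod_eq_of_lt (by omega)] at h2
      omega
    set t : Fin (N+1) := π⁻¹ (Fin.last N) with ht
    have hπt : π t = Fin.last N := Equiv.apply_symm_apply π _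
    have htm1 : t - 1 ≠ t := fun h => hone (sub_eq_self.mp h)
    have htp1 : t + 1 ≠ t := fun h => hone (add_eq_left.mp h)
    have hne : ∀ s : Fin (N+1), s ≠ t → π s ≠ Fin.last N := by
      intro s h hc
      exact h (π.injective (by rw [hc, hπt]))
    have key : ∀ s : Fin (N+1),
        (((π (s+1) + 1 : Fin (N+1)) : ℕ) < ((π s + 1 : Fin (N+1)) : ℕ)) ↔
        (s = t - 1 ∨ ((π (s+1) : ℕ) < (π s : ℕ) ∧ s ≠ t)) := by
      intro s
      by_cases hst : s = t
      · subst hst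
        rw [hπt]
        have h1 : ((Fin.last N + 1 : Fin (N+1)) : ℕ) = 0 := by
          rw [Fin.val_add_one, if_pos rfl]
        rw [h1]
        simp only [Nat.not_lt_zero, false_iff, not_or, not_and]
        exact ⟨fun h => htm1 h.symm, fun _ h => h rfl⟩
      · by_cases hst1 : s + 1 = t
        · have hs : s = t - 1 := eq_sub_iff_add_eq.mpr hst1
          rw [hst1, hπt]
          have h1 : ((Fin.last N + 1 : Fin (N+1)) : ℕ) = 0 := by
            rw [Fin.val_add_one, if_pos rfl]
          have h2 : ((π s + 1 : Fin (N+1)) : ℕ) = (π s : ℕ) + 1 := by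
            rw [Fin.val_add_one, if_neg (hne s hst)]
          rw [h1, h2]
          simp [hs]
        · have h1 : ((π (s+1) + 1 : Fin (N+1)) : ℕ) = (π (s+1) : ℕ) + 1 := by
            rw [Fin.val_add_one, if_neg (hne _ hst1)]
          have h2 : ((π s + 1 : Fin (N+1)) : ℕ) = (π s : ℕ) + 1 := by
            rw [Fin.val_add_one, if_neg (hne s hst)]
          rw [h1, h2]
          have hsm : s ≠ t - 1 := fun h => hst1 (by rw [h, sub_add_cancel])
          constructor
          · intro h; exact Or.inr ⟨by omega, hst⟩
          · rintro (h | ⟨h, _⟩)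
            · exact absurd h hsm
            · omega
    have htD : t ∈ (univ : Finset (Fin (N+1))).filter (fun s => (π (s+1) : ℕ) < (π s : ℕ)) := by
      simp only [Finset.mem_filter, Finset.mem_univ, true_and]
      rw [hπt]
      have : (π (t+1) : ℕ) < N := Fin.val_lt_last (hne _ htp1)
      simpa [Fin.last] using this
    have ht1D : t - 1 ∉ (univ : Finset (Fin (N+1))).filter (fun s => (π (s+1) : ℕ) < (π s : ℕ)) := by
      simp only [Finset.mem_filter, Finset.mem_univ, true_and]
      rw [sub_add_cancel, hπt]
      have : (π (t-1) : ℕ) < N := Fin.val_lt_last (hne _ htm1)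
      simp only [not_lt]
      simpa [Fin.last] using Nat.le_of_lt this
    have hD' : (univ : Finset (Fin (N+1))).filter
        (fun s => (((finRotate (N+1) * π) (s+1) : Fin (N+1)) : ℕ) < (((finRotate (N+1) * π) s : Fin (N+1)) : ℕ))
        = insert (t - 1) (((univ : Finset (Fin (N+1))).filter
            (fun s => (π (s+1) : ℕ) < (π s : ℕ))).erase t) := by
      ext s
      simp only [Finset.mem_filter, Finset.mem_univ, true_and, Finset.mem_insert,
        Finset.mem_erase, Equiv.Perm.mul_apply, finRotate_succ_apply]
      rw [key s]
      tauto
    unfold cdesC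
    rw [hD', Finset.card_insert_of_notMem (fun h => ht1D (Finset.mem_of_mem_erase h)),
      Finset.card_erase_of_mem htD]
    have hpos : 0 < ((univ : Finset (Fin (N+1))).filter
        (fun s => (π (s+1) : ℕ) < (π s : ℕ))).card := Finset.card_pos.mpr ⟨t, htD⟩
    omega

theorem cdesC_left' (n : ℕ) (π : Equiv.Perm (Fin (n+1))) :
    cdesC n (finRotate (n+1) * π) = cdesC n π := by
  cases n with
  | zero =>
    have h : finRotate 1 * π = π := Subsingleton.elim _ _
    rw [h]
  | succ m => exact cdesC_left_aux (m+1) (by omega) π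

/-- For `0 ≤ i ≤ n-1`, both `π ∘ ω^i` and `ω^i ∘ π` have the same cyclic descent
number as `π`, where `ω` is the `n`-cycle `(1 2 ⋯ n)`. -/
theorem cdes_rotate (n : ℕ) (π : Equiv.Perm (Fin n)) (i : ℕ) (hi : i ≤ n - 1) :
    cdesA n (π * (finRotate n) ^ i) = cdesA n π ∧
    cdesA n ((finRotate n) ^ i * π) = cdesA n π := by
  cases n with
  | zero =>
    constructor <;> simp [cdesA, desA, desSetA, aval]
  | succ m =>
    suffices h : ∀ (σ : Equiv.Perm (Fin (m+1))) (j : ℕ),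
        cdesA (m+1) (σ * (finRotate (m+1)) ^ j) = cdesA (m+1) σ ∧
        cdesA (m+1) ((finRotate (m+1)) ^ j * σ) = cdesA (m+1) σ by
      exact h π i
    intro σ j
    induction j with
    | zero => simp
    | succ k ih =>
      constructor
      · rw [pow_succ, ← mul_assoc, cdesA_eq_cdesC, cdesC_right, ← cdesA_eq_cdesC]
        exact ih.1
      · rw [pow_succ', mul_assoc, cdesA_eq_cdesC, cdesC_left', ← cdesA_eq_cdesC]
        exact ih.2
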